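/- Let 𝒴 be a finite linearly ordered set and let Q, Q' : 𝒴 → (0,1] be strictly positive probability mass functions on 𝒴. Let γ ∈ (0,1) and η ∈ (−1,∞), let (w_k)_{k≥1} be the truncated negative binomial distribution D_{η,γ} with probability generating function φ, and define A(y) = φ(Q(≤y)) − φ(Q(<y)) and A'(y) = φ(Q'(≤y)) − φ(Q'(<y)). Let ε₀ ≥ 0 and suppose ∑_y max(Q(y) − e^{ε₀} Q'(y), 0) = 0 and ∑_y max(Q'(y) − e^{ε₀} Q(y), 0) = 0 (i.e., the base mechanism is ε₀-differentially private on this pair). Then ∑_{y∈𝒴} max(A(y) − e^{(η+2)ε₀}·A'(y), 0) = 0, i.e., the selection algorithm is (η+2)·ε₀-differentially private on this pair. -/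

import Mathlib

open Finset Real

/-- Cumulative mass `Q(≤ y)` of a pmf on a finite linearly ordered set. -/
noncomputable def cumLE {Y : Type*} [Fintype Y] [LinearOrder Y] (Q : Y → ℝ) (y : Y) : ℝ :=
  ∑ z ∈ Finset.univ.filter (fun z => z ≤ y), Q z

/-- Cumulative mass `Q(< y)` of a pmf on a finite linearly ordered set. -/
noncomputable def cumLT {Y : Type*} [Fintype Y] [LinearOrder Y] (Q : Y → ℝ) (y : Y) : ℝ :=
  ∑ z ∈ Finset.univ.filter (fun z => z < y), Q z

/-- The pmf of the truncated negative binomial distribution `D_{η,γ}` (supported on `k ≥ 1`). -/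
noncomputable def negBinPMF (η γ : ℝ) (k : ℕ) : ℝ :=
  if k = 0 then 0
  else if η = 0 then (1 - γ) ^ k / (k * Real.log (1 / γ))
  else (1 - γ) ^ k / (γ ^ (-η) - 1) * ∏ i ∈ Finset.range k, ((i + η) / (i + 1))

/-- The mean of the truncated negative binomial distribution `D_{η,γ}`. -/
noncomputable def negBinMean (η γ : ℝ) : ℝ :=
  if η = 0 then (1 / γ - 1) / Real.log (1 / γ)
  else η * (1 - γ) / (γ * (1 - γ ^ η))

/-- The probability generating function of a distribution `w` on ℕ. -/
noncomputable def pgf (w : ℕ → ℝ) (z : ℝ) : ℝ := ∑' k : ℕ, w k * z ^ k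



noncomputable def Jint (β a b : ℝ) : ℝ := ∫ t in a..b, t ^ (-β)

lemma int_shifted {β a : ℝ} (ha : 0 < a) {c d : ℝ} (hc : 0 ≤ c) (hd : 0 ≤ d) :
    IntervalIntegrable (fun s : ℝ => (a + s) ^ (-β)) MeasureTheory.volume c d := by
  apply ContinuousOn.intervalIntegrable
  apply ContinuousOn.rpow_const (by fun_prop)
  intro x hx
  left
  rcases Set.mem_uIcc.1 hx with h | h
  · exact ne_of_gt (by linarith [h.1])
  · exact ne_of_gt (by linarith [h.1])

lemma Jint_shift {β a d : ℝ} :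
    Jint β a (a + d) = ∫ s in (0:ℝ)..d, (a + s) ^ (-β) := by
  have := intervalIntegral.integral_comp_add_left (a := (0:ℝ)) (b := d)
    (fun t : ℝ => t ^ (-β)) a
  simp only [add_zero] at this
  rw [Jint, ← this]

lemma Jint_mono {β : ℝ} (hβ : 0 ≤ β) {a₁ a₂ d₁ d₂ : ℝ} (ha₂ : 0 < a₂) (ha : a₂ ≤ a₁)
    (hd₁ : 0 ≤ d₁) (hd : d₁ ≤ d₂) :
    Jint β a₁ (a₁ + d₁) ≤ Jint β a₂ (a₂ + d₂) := by
  have ha₁ : 0 < a₁ := lt_of_lt_of_le ha₂ ha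
  rw [Jint_shift, Jint_shift]
  have step1 : (∫ s in (0:ℝ)..d₁, (a₁ + s) ^ (-β)) ≤ ∫ s in (0:ℝ)..d₁, (a₂ + s) ^ (-β) := by
    apply intervalIntegral.integral_mono_on hd₁ (int_shifted ha₁ le_rfl hd₁)
      (int_shifted ha₂ le_rfl hd₁)
    intro x hx
    exact Real.rpow_le_rpow_of_nonpos (by linarith [hx.1]) (by linarith) (by linarith)
  have step2 : (∫ s in (0:ℝ)..d₁, (a₂ + s) ^ (-β)) ≤ ∫ s in (0:ℝ)..d₂, (a₂ + s) ^ (-β) := by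
    apply intervalIntegral.integral_mono_interval le_rfl hd₁ hd _
      (int_shifted ha₂ le_rfl (le_trans hd₁ hd))
    filter_upwards [MeasureTheory.ae_restrict_mem measurableSet_Ioc] with x hx
    exact Real.rpow_nonneg (by linarith [hx.1]) _
  linarith

lemma Jint_scale {β r a b : ℝ} (hr : 0 < r) (ha : 0 < a) (hb : 0 < b) :
    Jint β (a / r) (b / r) = r ^ β / r * Jint β a b := by
  have hr' : r⁻¹ ≠ 0 := by positivity
  have key := intervalIntegral.integral_comp_mul_left (a := a) (b := b)
    (fun t : ℝ => t ^ (-β)) hr'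
  simp only [inv_inv] at key
  have : ∀ x ∈ Set.uIcc a b, (fun x => (r⁻¹ * x) ^ (-β)) x = (fun x => r ^ β * x ^ (-β)) x := by
    intro x hx
    have hx0 : 0 < x := by
      rcases Set.mem_uIcc.1 hx with h | h
      · linarith [h.1]
      · linarith [h.1]
    simp only
    rw [Real.mul_rpow (by positivity) hx0.le, Real.inv_rpow hr.le, ← Real.rpow_neg hr.le,
      neg_neg]
  rw [intervalIntegral.integral_congr this, intervalIntegral.integral_const_mul,
    smul_eq_mul] at key
  rw [Jint, Jint, div_eq_inv_mul, div_eq_inv_mul, div_mul_eq_mul_div,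
    eq_div_iff (ne_of_gt hr)]
  linear_combination -key

lemma Jint_concave {β a d c : ℝ} (hβ : 0 ≤ β) (ha : 0 < a) (hd : 0 ≤ d) (hc : 1 ≤ c) :
    Jint β a (a + c * d) ≤ c * Jint β a (a + d) := by
  have hc0 : (0:ℝ) < c := by linarith
  rw [Jint_shift, Jint_shift]
  have key := intervalIntegral.integral_comp_mul_left (a := (0:ℝ)) (b := d)
    (fun s : ℝ => (a + s) ^ (-β)) (ne_of_gt hc0)
  simp only [mul_zero, smul_eq_mul] at key
  have h2 : (∫ s in (0:ℝ)..c * d, (a + s) ^ (-β)) = c * ∫ s in (0:ℝ)..d, (a + c * s) ^ (-β) := by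
    rw [key]; field_simp
  rw [h2]
  have mono : (∫ s in (0:ℝ)..d, (a + c * s) ^ (-β)) ≤ ∫ s in (0:ℝ)..d, (a + s) ^ (-β) := by
    apply intervalIntegral.integral_mono_on hd _ (int_shifted ha le_rfl hd)
    · intro x hx
      apply Real.rpow_le_rpow_of_nonpos (by linarith [hx.1]) (by nlinarith [hx.1])
        (by linarith)
    · apply ContinuousOn.intervalIntegrable
      apply ContinuousOn.rpow_const (by fun_prop)
      intro x hx
      rcases Set.mem_uIcc.1 hx with h | h
      · exact Or.inl (ne_of_gt (by nlinarith [h.1]))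
      · exact Or.inl (ne_of_gt (by nlinarith [h.1, h.2]))
  nlinarith

lemma Jint_key {β r u v u' v' : ℝ} (hβ : 0 < β) (hr : 1 ≤ r) (hu : 0 < u) (hu' : 0 < u')
    (huv : u ≤ v) (hu'v' : u' ≤ v') (h1 : u' ≤ r * u) (h2 : v - u ≤ r * (v' - u')) :
    Jint β u v ≤ r ^ (β + 1) * Jint β u' v' := by
  have hr0 : (0:ℝ) < r := by linarith
  have hd' : 0 ≤ v' - u' := by linarith
  have hstep1 : Jint β u v ≤ Jint β (u' / r) (u' / r + r * (v' - u')) := by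
    have : Jint β u v = Jint β u (u + (v - u)) := by ring_nf
    rw [this]
    exact Jint_mono hβ.le (by positivity) (by rw [div_le_iff₀ hr0]; linarith [mul_comm u r]) 
      (by linarith) h2
  have heq : u' / r + r * (v' - u') = (u' + r * r * (v' - u')) / r := by field_simp
  have hb : 0 < u' + r * r * (v' - u') := by nlinarith
  have hstep2 : Jint β (u' / r) ((u' + r * r * (v' - u')) / r)
      = r ^ β / r * Jint β u' (u' + r * r * (v' - u')) := Jint_scale hr0 hu' hb
  have hstep3 : Jint β u' (u' + r * r * (v' - u')) ≤ r * r * Jint β u' (u' + (v' - u')) := by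
    exact Jint_concave (c := r * r) hβ.le hu' hd' (by nlinarith)
  have hv' : u' + (v' - u') = v' := by ring
  rw [hv'] at hstep3
  have hpow : 0 < r ^ β / r := by positivity
  calc Jint β u v ≤ r ^ β / r * Jint β u' (u' + r * r * (v' - u')) := by
        rw [← hstep2, ← heq]; exact hstep1
    _ ≤ r ^ β / r * (r * r * Jint β u' v') := by nlinarith
    _ = r ^ (β + 1) * Jint β u' v' := by rw [Real.rpow_add_one (ne_of_gt hr0)]; field_simp

lemma Jint_closed_ne {η u v : ℝ} (hη : η ≠ 0) (hu : 0 < u) (hv : 0 < v) :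
    Jint (η + 1) u v = (u ^ (-η) - v ^ (-η)) / η := by
  rw [Jint, integral_rpow (Or.inr ⟨by intro h; apply hη; linarith [neg_eq_iff_eq_neg.1 h],
    fun h => by rcases Set.mem_uIcc.1 h with h | h <;> linarith [h.1]⟩)]
  have : -(η + 1) + 1 = -η := by ring
  rw [this]
  rw [div_eq_div_iff (by simpa using hη) hη]
  ring

lemma Jint_closed_zero {u v : ℝ} (hu : 0 < u) (hv : 0 < v) :
    Jint 1 u v = Real.log v - Real.log u := by
  rw [Jint]
  have : ∀ x ∈ Set.uIcc u v, (fun t : ℝ => t ^ (-(1:ℝ))) x = (fun t : ℝ => t⁻¹) x := by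
    intro x hx
    have : ((-1 : ℤ) : ℝ) = (-(1:ℝ)) := by norm_num
    simp only [← this, Real.rpow_intCast, zpow_neg_one]
  rw [intervalIntegral.integral_congr this,
    integral_inv (fun h => by rcases Set.mem_uIcc.1 h with h | h <;> linarith [h.1]),
    Real.log_div (ne_of_gt hv) (ne_of_gt hu)]


noncomputable def nbProd (η : ℝ) (k : ℕ) : ℝ :=
  ∏ i ∈ Finset.range k, (((i : ℝ) + η) / ((i : ℝ) + 1))

lemma nbProd_succ (η : ℝ) (k : ℕ) :
    nbProd η (k + 1) = nbProd η k * (((k : ℝ) + η) / ((k : ℝ) + 1)) :=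
  Finset.prod_range_succ _ _

lemma nbProd_zero (η : ℝ) : nbProd η 0 = 1 := rfl

/-- Main summability workhorse. -/
lemma nb_sum_b (η : ℝ) {x : ℝ} (hx : |x| < 1) :
    Summable (fun k : ℕ => |nbProd η k| * ((k : ℝ) + 1) * |x| ^ k) := by
  set c := |η| with hc
  have hc0 : 0 ≤ c := abs_nonneg _
  have hx0 : 0 ≤ |x| := abs_nonneg _
  set r := (1 + |x|) / 2 with hrdef
  have hr1 : r < 1 := by rw [hrdef]; linarith
  set δ := (1 - |x|) / 2 with hδdef
  have hδ : 0 < δ := by rw [hδdef]; linarith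
  obtain ⟨N, hN⟩ := exists_nat_ge ((2 * (c + 1) + (c + 1) ^ 2) / δ)
  apply summable_of_ratio_norm_eventually_le hr1
  rw [Filter.eventually_atTop]
  refine ⟨N + 1, fun k hk => ?_⟩
  have hK0 : (0:ℝ) ≤ (k : ℝ) := Nat.cast_nonneg k
  have hk1 : (1 : ℝ) ≤ (k : ℝ) + 1 := by linarith
  have hkN : ((N : ℝ)) ≤ (k : ℝ) := by exact_mod_cast le_trans (Nat.le_succ N) hk
  have hδk : 2 * (c + 1) + (c + 1) ^ 2 ≤ δ * ((k:ℝ) + 1) := by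
    have h1 : 2 * (c + 1) + (c + 1) ^ 2 ≤ δ * N := by
      rw [div_le_iff₀ hδ] at hN; linarith
    nlinarith
  have key : |x| * (((k:ℝ) + c) * ((k:ℝ) + 2)) ≤ r * (((k:ℝ) + 1) * ((k:ℝ) + 1)) := by
    have hrx : r - |x| = δ := by rw [hrdef, hδdef]; ring
    have hB := mul_le_mul_of_nonneg_right hδk (by positivity : (0:ℝ) ≤ (k:ℝ) + 1)
    nlinarith [mul_nonneg hc0 hK0, hx.le, mul_nonneg (sub_nonneg.2 hx.le)
      (mul_nonneg hc0 hK0), mul_nonneg (sub_nonneg.2 hx.le) hc0]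
  have hpos : (0:ℝ) < (k:ℝ) + 1 := by linarith
  have hratio : |nbProd η (k + 1)| ≤ |nbProd η k| * (((k:ℝ) + c) / ((k:ℝ) + 1)) := by
    rw [nbProd_succ, abs_mul, abs_div, abs_of_pos hpos]
    apply mul_le_mul_of_nonneg_left _ (abs_nonneg _)
    apply (div_le_div_iff_of_pos_right hpos).2
    calc |(k:ℝ) + η| ≤ |(k:ℝ)| + |η| := abs_add_le _ _
      _ = (k:ℝ) + c := by rw [abs_of_nonneg hK0]
  have hnorm : ∀ m : ℕ, ‖|nbProd η m| * ((m : ℝ) + 1) * |x| ^ m‖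
      = |nbProd η m| * ((m : ℝ) + 1) * |x| ^ m := fun m => Real.norm_of_nonneg (by positivity)
  rw [hnorm, hnorm]
  have hcast : ((k + 1 : ℕ) : ℝ) = (k : ℝ) + 1 := by push_cast; ring
  rw [hcast]
  calc |nbProd η (k+1)| * ((k:ℝ) + 1 + 1) * |x| ^ (k + 1)
      ≤ (|nbProd η k| * (((k:ℝ) + c) / ((k:ℝ) + 1))) * ((k:ℝ) + 1 + 1) * |x| ^ (k + 1) := by
        apply mul_le_mul_of_nonneg_right (mul_le_mul_of_nonneg_right hratio (by linarith))
          (by positivity)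
    _ = (|nbProd η k| * |x| ^ k / ((k:ℝ) + 1)) * (|x| * (((k:ℝ) + c) * ((k:ℝ) + 2))) := by
        rw [pow_succ]; field_simp; ring
    _ ≤ (|nbProd η k| * |x| ^ k / ((k:ℝ) + 1)) * (r * (((k:ℝ) + 1) * ((k:ℝ) + 1))) := by
        apply mul_le_mul_of_nonneg_left key (by positivity)
    _ = r * (|nbProd η k| * ((k:ℝ) + 1) * |x| ^ k) * (((k:ℝ) + 1) / ((k:ℝ) + 1)) := by ring
    _ = r * (|nbProd η k| * ((k:ℝ) + 1) * |x| ^ k) := by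
        rw [div_self (ne_of_gt hpos), mul_one]

lemma nb_summable₁ (η : ℝ) {x : ℝ} (hx : |x| < 1) :
    Summable (fun k : ℕ => nbProd η k * x ^ k) := by
  apply Summable.of_abs
  apply Summable.of_nonneg_of_le (fun k => abs_nonneg _) _ (nb_sum_b η hx)
  intro k
  rw [abs_mul, abs_pow]
  nlinarith [abs_nonneg (nbProd η k), pow_nonneg (abs_nonneg x) k,
    mul_nonneg (abs_nonneg (nbProd η k)) (pow_nonneg (abs_nonneg x) k)]

lemma nb_summable₂ (η : ℝ) {x : ℝ} (hx : |x| < 1) :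
    Summable (fun k : ℕ => |nbProd η k| * ((k : ℝ) * |x| ^ (k - 1))) := by
  set x₀ := (1 + |x|) / 2 with hx₀def
  have hx0 : 0 ≤ |x| := abs_nonneg _
  have hx₀ : 0 < x₀ := by rw [hx₀def]; linarith
  have hx₀1 : |x₀| < 1 := by rw [abs_of_pos hx₀, hx₀def]; linarith
  have hxx₀ : |x| ≤ x₀ := by rw [hx₀def]; linarith
  refine Summable.of_nonneg_of_le (fun k => by positivity) (fun k => ?_)
    ((nb_sum_b η hx₀1).mul_left x₀⁻¹)
  rw [abs_of_pos hx₀]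
  rcases Nat.eq_zero_or_pos k with hk | hk
  · subst hk; simp; positivity
  · obtain ⟨m, rfl⟩ := Nat.exists_eq_succ_of_ne_zero (Nat.pos_iff_ne_zero.1 hk)
    have hms : m + 1 - 1 = m := rfl
    rw [hms]
    have h1 : |x| ^ m ≤ x₀ ^ m := pow_le_pow_left₀ hx0 hxx₀ m
    have h2 : x₀⁻¹ * (|nbProd η (m+1)| * (((m+1:ℕ) : ℝ) + 1) * x₀ ^ (m+1))
        = |nbProd η (m+1)| * ((((m+1:ℕ) : ℝ) + 1) * x₀ ^ m) := by
      rw [pow_succ]; field_simp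
    rw [h2]
    have hc : ((m + 1 : ℕ) : ℝ) ≤ ((m + 1 : ℕ) : ℝ) + 1 := by linarith
    apply mul_le_mul_of_nonneg_left _ (abs_nonneg _)
    apply mul_le_mul hc h1 (by positivity) (by positivity)

lemma nb_summable₂' (η : ℝ) {x : ℝ} (hx : |x| < 1) :
    Summable (fun k : ℕ => nbProd η k * ((k : ℝ) * x ^ (k - 1))) := by
  apply Summable.of_abs
  have : ∀ k : ℕ, |nbProd η k * ((k : ℝ) * x ^ (k - 1))|
      = |nbProd η k| * ((k : ℝ) * |x| ^ (k - 1)) := by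
    intro k
    rw [abs_mul, abs_mul, abs_pow, Nat.abs_cast]
  rw [funext this]
  exact nb_summable₂ η hx

noncomputable def nbS (η : ℝ) (z : ℝ) : ℝ := ∑' k : ℕ, nbProd η k * z ^ k

lemma hasDerivAt_nbS (η : ℝ) {z : ℝ} (hz : |z| < 1) :
    HasDerivAt (nbS η) (∑' k : ℕ, nbProd η k * ((k : ℝ) * z ^ (k - 1))) z := by
  set ρ := (1 + |z|) / 2 with hρdef
  have hz0 : 0 ≤ |z| := abs_nonneg _
  have hρ : 0 < ρ := by rw [hρdef]; linarith
  have hρ1 : |ρ| < 1 := by rw [abs_of_pos hρ, hρdef]; linarith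
  have hzρ : |z| < ρ := by rw [hρdef]; linarith
  have hmem : z ∈ Metric.ball (0:ℝ) ρ := by
    simpa [Metric.mem_ball, Real.dist_eq] using hzρ
  apply hasDerivAt_tsum_of_isPreconnected
    (u := fun k : ℕ => |nbProd η k| * ((k : ℝ) * ρ ^ (k - 1)))
    (t := Metric.ball (0:ℝ) ρ) (y₀ := z)
    ?_ Metric.isOpen_ball (convex_ball _ _).isPreconnected ?_ ?_ hmem ?_ hmem
  · have := nb_summable₂ η hρ1
    rwa [abs_of_pos hρ] at this
  · intro k y _
    exact (hasDerivAt_pow k y).const_mul (nbProd η k)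
  · intro k y hy
    have hyρ : |y| ≤ ρ := by
      rw [Metric.mem_ball, Real.dist_eq, sub_zero] at hy; exact hy.le
    rw [Real.norm_eq_abs, abs_mul, abs_mul, abs_pow, Nat.abs_cast]
    apply mul_le_mul_of_nonneg_left _ (abs_nonneg _)
    apply mul_le_mul_of_nonneg_left _ (Nat.cast_nonneg k)
    exact pow_le_pow_left₀ (abs_nonneg y) hyρ _
  · exact nb_summable₁ η hz

lemma nbS_ode (η : ℝ) {z : ℝ} (hz : |z| < 1) :
    (1 - z) * (∑' k : ℕ, nbProd η k * ((k : ℝ) * z ^ (k - 1))) = η * nbS η z := by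
  set T := ∑' k : ℕ, nbProd η k * ((k : ℝ) * z ^ (k - 1)) with hTdef
  have hT : HasSum (fun k : ℕ => nbProd η k * ((k : ℝ) * z ^ (k - 1))) T :=
    (nb_summable₂' η hz).hasSum
  have hS : HasSum (fun k : ℕ => nbProd η k * z ^ k) (nbS η z) :=
    (nb_summable₁ η hz).hasSum
  -- T * z  =  ∑ k * a_k * z^k
  have hTz : HasSum (fun k : ℕ => (k : ℝ) * nbProd η k * z ^ k) (T * z) := by
    have h := hT.mul_right z
    refine h.congr_fun fun k => ?_
    rcases Nat.eq_zero_or_pos k with hk | hk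
    · subst hk; simp
    · obtain ⟨m, rfl⟩ := Nat.exists_eq_succ_of_ne_zero (Nat.pos_iff_ne_zero.1 hk)
      have hms : m + 1 - 1 = m := rfl
      rw [hms, pow_succ]
      ring
  have hshift : HasSum (fun k : ℕ => nbProd η (k+1) * ((((k+1):ℕ) : ℝ) * z ^ k)) T := by
    have h0 : (fun k : ℕ => nbProd η k * ((k : ℝ) * z ^ (k - 1))) 0 = 0 := by simp
    have := (hasSum_nat_add_iff
      (f := fun k : ℕ => nbProd η k * ((k : ℝ) * z ^ (k - 1))) 1).2 (by
        simpa [h0] using hT)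
    refine this.congr_fun fun k => ?_
    have hms : k + 1 - 1 = k := rfl
    rw [hms]
  have hshift' : HasSum (fun k : ℕ => ((k : ℝ) + η) * nbProd η k * z ^ k) T := by
    refine hshift.congr_fun fun k => ?_
    have hne : ((k : ℝ) + 1) ≠ 0 := by positivity
    rw [nbProd_succ]
    push_cast
    field_simp
  have hcomb : HasSum (fun k : ℕ => ((k : ℝ) + η) * nbProd η k * z ^ k)
      (T * z + η * nbS η z) := by
    refine (hTz.add (hS.mul_left η)).congr_fun fun k => ?_
    ring
  have huniq : T = T * z + η * nbS η z := hshift'.unique hcomb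
  linear_combination huniq

lemma nbS_zero_eq (η : ℝ) : nbS η 0 = 1 := by
  rw [nbS, tsum_eq_single 0 (fun k hk => by simp [zero_pow hk])]
  simp [nbProd_zero]

lemma nbS_eq (η : ℝ) {b : ℝ} (hb0 : 0 ≤ b) (hb : b < 1) :
    nbS η b = (1 - b) ^ (-η) := by
  have hF : ∀ z : ℝ, |z| < 1 → HasDerivAt (fun w => (1 - w) ^ η * nbS η w) 0 z := by
    intro z hz
    have habs := abs_lt.1 hz
    have h1z : 0 < 1 - z := by linarith [habs.2]
    have hS' := hasDerivAt_nbS η hz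
    have hpow : HasDerivAt (fun w : ℝ => (1 - w) ^ η) (η * (1 - z) ^ (η - 1) * (-1)) z := by
      have h := Real.hasDerivAt_rpow_const (x := 1 - z) (p := η) (Or.inl (ne_of_gt h1z))
      exact h.comp z ((hasDerivAt_id z).const_sub 1)
    have hmul := hpow.mul hS'
    refine hmul.congr_deriv ?_
    have hode := nbS_ode η hz
    have hpow_sub : (1 - z) ^ η = (1 - z) ^ (η - 1) * (1 - z) := by
      nth_rewrite 3 [← Real.rpow_one (1 - z)]
      rw [← Real.rpow_add h1z]
      norm_num
    rw [hpow_sub]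
    linear_combination ((1 - z) ^ (η - 1)) * hode
  have hcont : ContinuousOn (fun w => (1 - w) ^ η * nbS η w) (Set.Icc 0 b) := by
    intro x hx
    have hx1 : |x| < 1 := by rw [abs_lt]; constructor <;> [linarith [hx.1]; linarith [hx.2]]
    exact ((hF x hx1).continuousAt).continuousWithinAt
  have hderiv : ∀ x ∈ Set.Ico 0 b, HasDerivWithinAt (fun w => (1 - w) ^ η * nbS η w) 0
      (Set.Ici x) x := by
    intro x hx
    have hx1 : |x| < 1 := by rw [abs_lt]; constructor <;> [linarith [hx.1]; linarith [hx.2]]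
    exact (hF x hx1).hasDerivWithinAt
  have hval := constant_of_has_deriv_right_zero hcont hderiv b (Set.mem_Icc.2 ⟨hb0, le_rfl⟩)
  simp only [sub_zero, Real.one_rpow, nbS_zero_eq, mul_one] at hval
  have h1b : 0 < 1 - b := by linarith
  rw [Real.rpow_neg h1b.le]
  rw [mul_comm] at hval
  exact eq_inv_of_mul_eq_one_left hval

noncomputable def nbκ (η γ : ℝ) : ℝ :=
  if η = 0 then (Real.log (1 / γ))⁻¹ else η / (γ ^ (-η) - 1)

lemma nbκ_pos {η γ : ℝ} (hη1 : -1 < η) (hγ0 : 0 < γ) (hγ1 : γ < 1) : 0 < nbκ η γ := by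
  rw [nbκ]
  by_cases hη : η = 0
  · rw [if_pos hη]
    have : 1 < 1 / γ := by rw [lt_div_iff₀ hγ0]; linarith
    exact inv_pos.2 (Real.log_pos this)
  · rw [if_neg hη]
    rcases lt_or_gt_of_ne hη with h | h
    · have hlt : γ ^ (-η) < 1 := Real.rpow_lt_one hγ0.le hγ1 (by linarith)
      exact div_pos_of_neg_of_neg h (by linarith)
    · have hgt : 1 < γ ^ (-η) :=
        (Real.one_lt_rpow_iff_of_pos hγ0).2 (Or.inr ⟨hγ1, by linarith⟩)
      exact div_pos h (by linarith)

lemma pgf_negBin_ne {η γ : ℝ} (hη : η ≠ 0) (hγ0 : 0 < γ) (hγ1 : γ < 1) {x : ℝ}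
    (hx0 : 0 ≤ x) (hx1 : x ≤ 1) :
    pgf (negBinPMF η γ) x = ((1 - (1 - γ) * x) ^ (-η) - 1) / (γ ^ (-η) - 1) := by
  set z := (1 - γ) * x with hzdef
  have hz0 : 0 ≤ z := mul_nonneg (by linarith) hx0
  have hz1 : z < 1 := by nlinarith
  have hzabs : |z| < 1 := by rw [abs_of_nonneg hz0]; exact hz1
  have hS : HasSum (fun k : ℕ => nbProd η k * z ^ k) ((1 - z) ^ (-η)) := by
    have h := (nb_summable₁ η hzabs).hasSum
    have he : (∑' k : ℕ, nbProd η k * z ^ k) = (1 - z) ^ (-η) := nbS_eq η hz0 hz1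
    rwa [he] at h
  set c := γ ^ (-η) - 1 with hcdef
  have hc : c ≠ 0 := by
    rw [hcdef]
    rcases lt_or_gt_of_ne hη with h | h
    · have hlt : γ ^ (-η) < 1 := Real.rpow_lt_one hγ0.le hγ1 (by linarith)
      exact ne_of_lt (by linarith)
    · have hgt : 1 < γ ^ (-η) :=
        (Real.one_lt_rpow_iff_of_pos hγ0).2 (Or.inr ⟨hγ1, by linarith⟩)
      exact ne_of_gt (by linarith)
  have hmain : HasSum (fun k : ℕ => negBinPMF η γ k * x ^ k)
      ((1 - z) ^ (-η) / c - 1 / c) := by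
    have h1 : HasSum (fun k : ℕ => nbProd η k * z ^ k / c) ((1 - z) ^ (-η) / c) :=
      hS.div_const c
    have h2 : HasSum (fun k : ℕ => if k = 0 then 1 / c else (0:ℝ)) (1 / c) :=
      hasSum_ite_eq 0 (1 / c)
    refine (h1.sub h2).congr_fun fun k => ?_
    by_cases hk : k = 0
    · subst hk; simp [negBinPMF, nbProd_zero]
    · rw [negBinPMF, if_neg hk, if_neg hη, if_neg hk]
      rw [hzdef, mul_pow, nbProd]
      rw [← hcdef]
      ring
  rw [pgf, hmain.tsum_eq]
  rw [div_sub_div_same]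

lemma pgf_negBin_zero {γ : ℝ} (hγ0 : 0 < γ) (hγ1 : γ < 1) {x : ℝ}
    (hx0 : 0 ≤ x) (hx1 : x ≤ 1) :
    pgf (negBinPMF 0 γ) x = -Real.log (1 - (1 - γ) * x) / Real.log (1 / γ) := by
  set z := (1 - γ) * x with hzdef
  have hz0 : 0 ≤ z := mul_nonneg (by linarith) hx0
  have hz1 : z < 1 := by nlinarith
  have hzabs : |z| < 1 := by rw [abs_of_nonneg hz0]; exact hz1
  set L := Real.log (1 / γ) with hLdef
  have hL : 0 < L := Real.log_pos (by rw [lt_div_iff₀ hγ0]; linarith)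
  have hlog := Real.hasSum_pow_div_log_of_abs_lt_one hzabs
  have h2 : HasSum (fun n : ℕ => negBinPMF 0 γ (n + 1) * x ^ (n + 1))
      (-Real.log (1 - z) / L) := by
    refine (hlog.div_const L).congr_fun fun n => ?_
    rw [negBinPMF, if_neg (Nat.succ_ne_zero n), if_pos rfl]
    have hn : ((n + 1 : ℕ) : ℝ) = (n : ℝ) + 1 := by push_cast; ring
    rw [hn, hzdef, mul_pow]
    have hne : ((n : ℝ) + 1) ≠ 0 := by positivity
    rw [← hLdef]
    field_simp
  have h3 := (hasSum_nat_add_iff (f := fun k : ℕ => negBinPMF 0 γ k * x ^ k) 1).1 h2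
  rw [pgf, h3.tsum_eq]
  simp [negBinPMF]

lemma pgf_diff_eq {η γ : ℝ} (hη1 : -1 < η) (hγ0 : 0 < γ) (hγ1 : γ < 1) {p q : ℝ}
    (hp0 : 0 ≤ p) (hpq : p ≤ q) (hq1 : q ≤ 1) :
    pgf (negBinPMF η γ) q - pgf (negBinPMF η γ) p
      = nbκ η γ * Jint (η + 1) (1 - (1 - γ) * q) (1 - (1 - γ) * p) := by
  have hq0 : 0 ≤ q := le_trans hp0 hpq
  have hp1 : p ≤ 1 := le_trans hpq hq1
  have hu : 0 < 1 - (1 - γ) * q := by nlinarith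
  have hv : 0 < 1 - (1 - γ) * p := by nlinarith
  by_cases hη : η = 0
  · subst hη
    rw [pgf_negBin_zero hγ0 hγ1 hq0 hq1, pgf_negBin_zero hγ0 hγ1 hp0 hp1, nbκ, if_pos rfl]
    rw [show (0:ℝ) + 1 = 1 by ring, Jint_closed_zero hu hv]
    have hL : 0 < Real.log (1 / γ) := Real.log_pos (by rw [lt_div_iff₀ hγ0]; linarith)
    field_simp
    ring
  · rw [pgf_negBin_ne hη hγ0 hγ1 hq0 hq1, pgf_negBin_ne hη hγ0 hγ1 hp0 hp1, nbκ,
      if_neg hη, Jint_closed_ne hη hu hv]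
    have hc : γ ^ (-η) - 1 ≠ 0 := by
      rcases lt_or_gt_of_ne hη with h | h
      · have hlt : γ ^ (-η) < 1 := Real.rpow_lt_one hγ0.le hγ1 (by linarith)
        exact ne_of_lt (by linarith)
      · have hgt : 1 < γ ^ (-η) :=
          (Real.one_lt_rpow_iff_of_pos hγ0).2 (Or.inr ⟨hγ1, by linarith⟩)
        exact ne_of_gt (by linarith)
    field_simp
    ring

lemma cum_split {Y : Type*} [Fintype Y] [LinearOrder Y] (Q : Y → ℝ) (y : Y) :
    cumLE Q y = cumLT Q y + Q y := by
  rw [cumLE, cumLT]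
  have hs : Finset.univ.filter (fun z => z ≤ y)
      = insert y (Finset.univ.filter (fun z => z < y)) := by
    ext z
    simp only [Finset.mem_filter, Finset.mem_univ, true_and, Finset.mem_insert]
    constructor
    · intro h; rcases eq_or_lt_of_le h with h | h
      · exact Or.inl h
      · exact Or.inr h
    · rintro (rfl | h)
      · exact le_rfl
      · exact h.le
  rw [hs, Finset.sum_insert (by simp [lt_irrefl])]
  ring

lemma key_ineq {η γ r Qy Q'y p q p' q' : ℝ} (hη : -1 < η) (hγ0 : 0 < γ) (hγ1 : γ < 1)
    (hr1 : 1 ≤ r) (hq : q = p + Qy) (hq' : q' = p' + Q'y)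
    (hQy : 0 < Qy) (hQ'y : 0 < Q'y) (hp0 : 0 ≤ p) (hp'0 : 0 ≤ p')
    (hq1 : q ≤ 1) (hq'1 : q' ≤ 1)
    (hDPy : Qy ≤ r * Q'y) (htail : 1 - q' ≤ r * (1 - q)) (hqq' : q' ≤ r * q) :
    pgf (negBinPMF η γ) q - pgf (negBinPMF η γ) p
      ≤ r ^ (η + 2) * (pgf (negBinPMF η γ) q' - pgf (negBinPMF η γ) p') := by
  have hpq : p ≤ q := by rw [hq]; linarith
  have hp'q' : p' ≤ q' := by rw [hq']; linarith
  have hu : (0:ℝ) < 1 - (1 - γ) * q := by nlinarith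
  have hu' : (0:ℝ) < 1 - (1 - γ) * q' := by nlinarith
  have huv : 1 - (1 - γ) * q ≤ 1 - (1 - γ) * p := by nlinarith
  have hu'v' : 1 - (1 - γ) * q' ≤ 1 - (1 - γ) * p' := by nlinarith
  have h1 : 1 - (1 - γ) * q' ≤ r * (1 - (1 - γ) * q) := by nlinarith
  have h2 : (1 - (1 - γ) * p) - (1 - (1 - γ) * q)
      ≤ r * ((1 - (1 - γ) * p') - (1 - (1 - γ) * q')) := by
    have hd : q - p = Qy := by rw [hq]; ring
    have hd' : q' - p' = Q'y := by rw [hq']; ring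
    nlinarith
  have hβ : 0 < η + 1 := by linarith
  have hJ := Jint_key hβ hr1 hu hu' huv hu'v' h1 h2
  have hκ := nbκ_pos hη hγ0 hγ1
  rw [pgf_diff_eq hη hγ0 hγ1 hp0 hpq hq1, pgf_diff_eq hη hγ0 hγ1 hp'0 hp'q' hq'1]
  have hpow : r ^ (η + 1 + 1) = r ^ (η + 2) := by rw [show η + 1 + 1 = η + 2 from by ring]
  calc nbκ η γ * Jint (η + 1) (1 - (1 - γ) * q) (1 - (1 - γ) * p)
      ≤ nbκ η γ * (r ^ (η + 1 + 1) * Jint (η + 1) (1 - (1 - γ) * q') (1 - (1 - γ) * p')) :=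
        mul_le_mul_of_nonneg_left hJ hκ.le
    _ = r ^ (η + 2) * (nbκ η γ * Jint (η + 1) (1 - (1 - γ) * q') (1 - (1 - γ) * p')) := by
        rw [hpow]; ring

/-- Corollary 5.3: pure DP guarantee for private selection with a truncated
negative binomial number of candidates. -/
theorem private_selection_negbin_pure_dp
    {Y : Type*} [Fintype Y] [LinearOrder Y]
    (Q Q' : Y → ℝ)
    (hQ_pos : ∀ y, 0 < Q y) (hQ_le : ∀ y, Q y ≤ 1) (hQ_sum : ∑ y, Q y = 1)
    (hQ'_pos : ∀ y, 0 < Q' y) (hQ'_le : ∀ y, Q' y ≤ 1) (hQ'_sum : ∑ y, Q' y = 1)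
    (γ η : ℝ) (hγ : γ ∈ Set.Ioo (0 : ℝ) 1) (hη : -1 < η)
    (A A' : Y → ℝ)
    (hA : ∀ y, A y = pgf (negBinPMF η γ) (cumLE Q y) - pgf (negBinPMF η γ) (cumLT Q y))
    (hA' : ∀ y, A' y = pgf (negBinPMF η γ) (cumLE Q' y) - pgf (negBinPMF η γ) (cumLT Q' y))
    (ε₀ : ℝ) (hε₀ : 0 ≤ ε₀)
    (hQDP : ∑ y, max (Q y - Real.exp ε₀ * Q' y) 0 = 0)
    (hQDP' : ∑ y, max (Q' y - Real.exp ε₀ * Q y) 0 = 0) :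
    ∑ y, max (A y - Real.exp ((η + 2) * ε₀) * A' y) 0 = 0 := by
  obtain ⟨hγ0, hγ1⟩ := hγ
  have hr1 : 1 ≤ Real.exp ε₀ := by
    rw [← Real.exp_zero]; exact Real.exp_le_exp.2 hε₀
  have hDP1 : ∀ y, Q y ≤ Real.exp ε₀ * Q' y := by
    intro y
    have h := (Finset.sum_eq_zero_iff_of_nonneg
      (fun i _ => le_max_right (Q i - Real.exp ε₀ * Q' i) 0)).1 hQDP y (Finset.mem_univ y)
    have h2 := le_max_left (Q y - Real.exp ε₀ * Q' y) 0
    rw [h] at h2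
    linarith
  have hDP2 : ∀ y, Q' y ≤ Real.exp ε₀ * Q y := by
    intro y
    have h := (Finset.sum_eq_zero_iff_of_nonneg
      (fun i _ => le_max_right (Q' i - Real.exp ε₀ * Q i) 0)).1 hQDP' y (Finset.mem_univ y)
    have h2 := le_max_left (Q' y - Real.exp ε₀ * Q y) 0
    rw [h] at h2
    linarith
  have key : ∀ y, A y ≤ Real.exp ((η + 2) * ε₀) * A' y := by
    intro y
    have hq1 : cumLE Q y ≤ 1 := by
      rw [cumLE, ← hQ_sum]
      exact Finset.sum_le_sum_of_subset_of_nonneg (Finset.filter_subset _ _)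
        (fun i _ _ => (hQ_pos i).le)
    have hq'1 : cumLE Q' y ≤ 1 := by
      rw [cumLE, ← hQ'_sum]
      exact Finset.sum_le_sum_of_subset_of_nonneg (Finset.filter_subset _ _)
        (fun i _ _ => (hQ'_pos i).le)
    have htail : 1 - cumLE Q' y ≤ Real.exp ε₀ * (1 - cumLE Q y) := by
      have hQt := Finset.sum_filter_add_sum_filter_not Finset.univ (fun z => z ≤ y) Q
      have hQ't := Finset.sum_filter_add_sum_filter_not Finset.univ (fun z => z ≤ y) Q'
      rw [hQ_sum] at hQt
      rw [hQ'_sum] at hQ't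
      have hle : (∑ z ∈ Finset.univ.filter (fun z => ¬ z ≤ y), Q' z)
          ≤ Real.exp ε₀ * ∑ z ∈ Finset.univ.filter (fun z => ¬ z ≤ y), Q z := by
        rw [Finset.mul_sum]
        exact Finset.sum_le_sum (fun i _ => hDP2 i)
      have e1 : (1:ℝ) - (∑ z ∈ Finset.univ.filter (fun z => z ≤ y), Q z)
          = ∑ z ∈ Finset.univ.filter (fun z => ¬ z ≤ y), Q z := by linarith
      have e2 : (1:ℝ) - (∑ z ∈ Finset.univ.filter (fun z => z ≤ y), Q' z)
          = ∑ z ∈ Finset.univ.filter (fun z => ¬ z ≤ y), Q' z := by linarith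
      rw [cumLE, cumLE, e1, e2]
      exact hle
    have hqq' : cumLE Q' y ≤ Real.exp ε₀ * cumLE Q y := by
      rw [cumLE, cumLE, Finset.mul_sum]
      exact Finset.sum_le_sum (fun i _ => hDP2 i)
    have hkey := key_ineq hη hγ0 hγ1 hr1 (cum_split Q y) (cum_split Q' y)
      (hQ_pos y) (hQ'_pos y)
      (Finset.sum_nonneg (fun i _ => (hQ_pos i).le))
      (Finset.sum_nonneg (fun i _ => (hQ'_pos i).le))
      hq1 hq'1 (hDP1 y) htail hqq'
    have hexp : Real.exp ((η + 2) * ε₀) = Real.exp ε₀ ^ (η + 2) := by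
      rw [mul_comm, Real.exp_mul]
    rw [hA y, hA' y, hexp]
    exact hkey
  apply Finset.sum_eq_zero
  intro y _
  rw [max_eq_right]
  exact sub_nonpos.2 (key y)
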